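/- Let ρ ∈ (0,1) (so ρ(1−ρ) > 0), let f, g be negative real numbers, and let ω > 0. Then the two roots μ₊, μ₋ of the quadratic ρx² − γ(ω)x + (1−ρ) = 0 have distinct absolute values: |μ₊| ≠ |μ₋|. -/

import Mathlib

/-- `γ(ω) = (f + iωg + ω²)/(f + iωg)`. -/
noncomputable def gam (f g ω : ℝ) : ℂ :=
  ((f : ℂ) + Complex.I * ω * g + (ω : ℂ) ^ 2) / ((f : ℂ) + Complex.I * ω * g)

theorem stmt_15 (ρ : ℝ) (hρ : ρ ∈ Set.Ioo (0 : ℝ) 1) (f g : ℝ)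
    (hf : f < 0) (hg : g < 0) (ω : ℝ) (hω : 0 < ω) (μp μm : ℂ)
    (hroots : ∀ x : ℂ, (ρ : ℂ) * x ^ 2 - gam f g ω * x + (1 - (ρ : ℂ))
      = (ρ : ℂ) * (x - μp) * (x - μm)) :
    ‖μp‖ ≠ ‖μm‖ := by
  obtain ⟨hρ0, hρ1⟩ := hρ
  intro habs
  have hρc : (ρ : ℂ) ≠ 0 := by exact_mod_cast hρ0.ne'
  have ha : ((f : ℂ) + Complex.I * ω * g) ≠ 0 := by
    intro h
    have h' := congrArg Complex.re h
    simp [Complex.add_re, Complex.mul_re] at h'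
    exact absurd h' hf.ne
  -- coefficient identities
  have hprod : (ρ : ℂ) * (μp * μm) = 1 - (ρ : ℂ) := by
    have h0 := hroots 0
    linear_combination -h0
  have hsum : gam f g ω = (ρ : ℂ) * (μp + μm) := by
    have h1 := hroots 1
    have h2 := hroots (-1)
    linear_combination (h2 - h1) / 2
  -- product is the positive real (1-ρ)/ρ
  have hP : μp * μm = (((1 - ρ) / ρ : ℝ) : ℂ) := by
    push_cast
    field_simp
    linear_combination hprod
  have hPpos : (0 : ℝ) < (1 - ρ) / ρ := div_pos (by linarith) hρ0
  -- |μp|^2 = (1-ρ)/ρ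
  have habs2 : ‖μp‖ * ‖μm‖ = (1 - ρ) / ρ := by
    rw [← norm_mul, hP, Complex.norm_real, Real.norm_eq_abs, abs_of_pos hPpos]
  have hnormSq : Complex.normSq μp = (1 - ρ) / ρ := by
    rw [Complex.normSq_eq_norm_sq]
    rw [habs] at habs2 ⊢
    nlinarith [norm_nonneg μm]
  have hμp : μp ≠ 0 := by
    intro h
    rw [h, zero_mul] at hP
    have : (0 : ℝ) = (1 - ρ) / ρ := by exact_mod_cast hP
    linarith
  -- μm = conj μp
  have hconj : μm = starRingEnd ℂ μp := by
    have hmc : μp * starRingEnd ℂ μp = (((1 - ρ) / ρ : ℝ) : ℂ) := by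
      rw [Complex.mul_conj, hnormSq]
    have := hP.trans hmc.symm
    exact mul_left_cancel₀ hμp this
  -- hence γ has zero imaginary part
  have him : (gam f g ω).im = 0 := by
    have := congrArg Complex.im hsum
    rw [hconj] at this
    simpa [Complex.mul_im, Complex.add_im] using this
  -- but γ's imaginary part is nonzero
  have hγ : gam f g ω * ((f : ℂ) + Complex.I * ω * g)
      = ((f : ℂ) + Complex.I * ω * g) + (ω : ℂ) ^ 2 := by
    unfold gam
    field_simp
  set γ := gam f g ω with hγdef
  rw [show ((ω : ℂ)) ^ 2 = ((ω ^ 2 : ℝ) : ℂ) by push_cast; ring] at hγ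
  have h1 := congrArg Complex.re hγ
  have h2 := congrArg Complex.im hγ
  simp [pow_two, Complex.mul_re, Complex.mul_im, him] at h1 h2
  -- h2 : γ.re * (ω * g) = ω * g  (up to assoc), h1 : γ.re * f = f + ω^2
  have hωg : ω * g ≠ 0 := (mul_neg_of_pos_of_neg hω hg).ne
  have hr1 : γ.re = 1 := by
    have h3 : (γ.re - 1) * (ω * g) = 0 := by ring_nf; ring_nf at h2; linarith
    rcases mul_eq_zero.1 h3 with h | h
    · linarith
    · exact absurd h hωg
  rw [hr1] at h1
  nlinarith [mul_pos hω hω]
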